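/- arXiv:2408.16860 — 2 statements merged into one kernel-verified Lean document; each statement's English description precedes it below -/
import Mathlib

section
/- For all a, b ∈ {0, ±1, ±2} with a ≠ b, the smallest eigenvalue of the symmetric matrix [[0,2,a],[2,0,b],[a,b,0]] is at most -√5. -/
theorem stmt1 (a b : ℝ) (ha : a ∈ ({0, 1, -1, 2, -2} : Set ℝ))
    (hb : b ∈ ({0, 1, -1, 2, -2} : Set ℝ)) (hab : a ≠ b) :
    ∃ μ ∈ spectrum ℝ (!![0, 2, a; 2, 0, b; a, b, 0]), μ ≤ -Real.sqrt 5 := by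
  simp only [Set.mem_insert_iff, Set.mem_singleton_iff] at ha hb
  set s := Real.sqrt 5 with hs_def
  have hsq : s ^ 2 = 5 := Real.sq_sqrt (by norm_num)
  have hs0 : (0:ℝ) ≤ s := Real.sqrt_nonneg 5
  have hs2 : (2:ℝ) ≤ s := by nlinarith
  have hs3 : s ≤ 10 := by nlinarith
  set p : ℝ → ℝ := fun t => t ^ 3 - (4 + a ^ 2 + b ^ 2) * t - 4 * (a * b) with hp
  have ha2 : a ^ 2 ≤ 4 := by rcases ha with rfl|rfl|rfl|rfl|rfl <;> norm_num
  have hb2 : b ^ 2 ≤ 4 := by rcases hb with rfl|rfl|rfl|rfl|rfl <;> norm_num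
  have h1 : p (-10) ≤ 0 := by
    simp only [hp]
    nlinarith [sq_nonneg (a + b)]
  have h2 : 0 ≤ p (-s) := by
    simp only [hp]
    rcases ha with rfl|rfl|rfl|rfl|rfl <;> rcases hb with rfl|rfl|rfl|rfl|rfl <;>
      first
      | exact absurd rfl hab
      | nlinarith
  have hcont : ContinuousOn p (Set.Icc (-10) (-s)) := by fun_prop
  obtain ⟨μ, hμmem, hμ0⟩ := intermediate_value_Icc (by linarith : (-10:ℝ) ≤ -s) hcont
    (Set.mem_Icc.mpr ⟨h1, h2⟩)
  refine ⟨μ, ?_, hμmem.2⟩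
  rw [spectrum.mem_iff, Matrix.isUnit_iff_isUnit_det, isUnit_iff_ne_zero]
  simp only [not_not]
  have : (algebraMap ℝ (Matrix (Fin 3) (Fin 3) ℝ) μ - !![0, 2, a; 2, 0, b; a, b, 0]) =
      !![μ, -2, -a; -2, μ, -b; -a, -b, μ] := by
    ext i j
    fin_cases i <;> fin_cases j <;>
      simp [Matrix.algebraMap_matrix_apply]
  rw [this, Matrix.det_fin_three]
  simp
  have := hμ0
  simp only [hp] at this
  nlinarith [this]
end

section
/- Let F be a signed graph on vertex set V with signed adjacency matrix A_F, let a : V → ℕ⁺, and let A_{F,a} be the blow-up matrix indexed by pairs (u,i) with u ∈ V and 1 ≤ i ≤ a(u), defined by A_{F,a}((u,i),(v,j)) = 0 if (u,i)=(v,j), = 2 if u = v and i ≠ j, and = A_F(u,v) if u ≠ v. If A_F + 2I is positive semidefinite, then A_{F,a} + 2I is positive semidefinite. -/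
/-- The blow-up matrix `A_{F,a}` of a signed adjacency matrix `AF`. -/
def blowup {V : Type*} [DecidableEq V] (AF : Matrix V V ℝ) (a : V → ℕ) :
    Matrix (Σ v : V, Fin (a v)) (Σ v : V, Fin (a v)) ℝ :=
  fun p q => if p = q then 0 else if p.1 = q.1 then 2 else AF p.1 q.1

set_option maxRecDepth 4000 in
theorem stmt7 {V : Type*} [Fintype V] [DecidableEq V]
    (AF : Matrix V V ℝ) (hsym : AF.IsSymm) (hholl : ∀ v, AF v v = 0)
    (hsign : ∀ u v, AF u v = 0 ∨ AF u v = 1 ∨ AF u v = -1)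
    (a : V → ℕ) (ha : ∀ v, 1 ≤ a v)
    (hpsd : (AF + (2 : ℝ) • 1).PosSemidef) :
    (blowup AF a + (2 : ℝ) • 1).PosSemidef := by
  set M := AF + (2 : ℝ) • 1 with hM
  set B : Matrix V (Σ v : V, Fin (a v)) ℝ :=
    fun u p => if u = p.1 then 1 else 0 with hB
  have key : blowup AF a + (2 : ℝ) • 1 = B.conjTranspose * M * B := by
    ext p q
    have : (B.conjTranspose * M * B) p q = M p.1 q.1 := by
      simp only [Matrix.mul_apply, Matrix.conjTranspose_apply]
      simp only [hB]
      rw [Finset.sum_eq_single q.1]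
      · rw [if_pos rfl, mul_one, Finset.sum_eq_single p.1]
        · rw [if_pos rfl]; simp
        · intro u _ hu
          rw [if_neg hu, star_zero, zero_mul]
        · intro h; exact absurd (Finset.mem_univ _) h
      · intro v _ hv
        rw [if_neg hv, mul_zero]
      · intro h; exact absurd (Finset.mem_univ _) h
    rw [this, hM]
    simp only [Matrix.add_apply, Matrix.smul_apply, smul_eq_mul, Matrix.one_apply, blowup]
    by_cases hpq : p = q
    · rw [if_pos hpq, if_pos hpq, hpq, hholl, if_pos rfl]
    · rw [if_neg hpq, if_neg hpq]
      by_cases h1 : p.1 = q.1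
      · rw [if_pos h1, if_pos h1, h1, hholl]; ring
      · rw [if_neg h1, if_neg h1]
  rw [key]
  exact hpsd.conjTranspose_mul_mul_same B
end
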